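/- Let f ≥ 1 and consider the Z-module X = Z^{f·n} with basis E_{j,i} for 0 ≤ j ≤ f-1, 1 ≤ i ≤ n. Define χ_{j,k,l} = E_{j,k} − E_{j-1,l} (indices j taken mod f). Suppose m_{j,i} ∈ Z and n_{j,k,l,m} ∈ Z_{≥0} (for k < l, finitely many nonzero) satisfy Σ m_{j,i} χ_{j,i,i} + Σ n_{j,k,l,m} χ_{j,k,l} = 0 in X. Then all n_{j,k,l,m} = 0 and m_{0,i} = m_{1,i} = ... = m_{f-1,i} for every i. -/
import Mathlib


/-- In `X = ℤ^{f·n}` with basis `E_{j,i}` (`j ∈ ℤ/f` cyclic, `i ∈ Fin n`), let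
`χ_{j,k,l} = E_{j,k} − E_{j−1,l}`.  If integers `m_{j,i}` and nonnegative integers
`n_{j,k,l,m}` (supported on `k < l`, with `m` ranging over a finite range `M`)
satisfy `Σ m_{j,i} χ_{j,i,i} + Σ n_{j,k,l,m} χ_{j,k,l} = 0`, then all
`n_{j,k,l,m} = 0` and `m_{j,i}` is independent of `j` for each `i`. -/
theorem weight_zero_monomials (f n M : ℕ) [NeZero f]
    (χ : ZMod f → Fin n → Fin n → ((ZMod f × Fin n) → ℤ))
    (hχ : ∀ j k l, χ j k l = fun x =>
      (if x = (j, k) then 1 else 0) - (if x = (j - 1, l) then 1 else 0))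
    (m : ZMod f → Fin n → ℤ)
    (nn : ZMod f → Fin n → Fin n → Fin M → ℕ)
    (hsupp : ∀ j k l mm, ¬ k < l → nn j k l mm = 0)
    (heq : (∑ j : ZMod f, ∑ i : Fin n, m j i • χ j i i)
        + (∑ j : ZMod f, ∑ k : Fin n, ∑ l : Fin n, ∑ mm : Fin M,
            (nn j k l mm : ℤ) • χ j k l) = 0) :
    (∀ j k l mm, nn j k l mm = 0) ∧ (∀ j j' : ZMod f, ∀ i, m j i = m j' i) := by
  -- pairing functional
  let φ : ((ZMod f × Fin n) → ℤ) →+ ℤ :=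
    AddMonoidHom.mk' (fun g => ∑ x : ZMod f × Fin n, g x * (x.2 : ℤ))
      (by intro a b; simp [add_mul, Finset.sum_add_distrib])
  have hφsmul : ∀ (c : ℤ) (g : (ZMod f × Fin n) → ℤ), φ (c • g) = c * φ g := by
    intro c g
    simp only [φ, AddMonoidHom.mk'_apply, Pi.smul_apply, smul_eq_mul, mul_assoc, Finset.mul_sum]
  have hχφ : ∀ j k l, φ (χ j k l) = (k : ℤ) - (l : ℤ) := by
    intro j k l
    rw [hχ]
    simp [φ, sub_mul, Finset.sum_sub_distrib, ite_mul, Finset.sum_ite_eq']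
  have h2 := congrArg φ heq
  simp only [map_add, map_sum, map_zero, hφsmul, hχφ, sub_self, mul_zero,
    Finset.sum_const_zero, zero_add] at h2
  -- h2 : ∑ j ∑ k ∑ l ∑ mm nn * (k - l) = 0
  have hterm : ∀ (j : ZMod f) (k l : Fin n) (mm : Fin M),
      (nn j k l mm : ℤ) * ((k : ℤ) - (l : ℤ)) ≤ 0 := by
    intro j k l mm
    by_cases h : k < l
    · apply mul_nonpos_of_nonneg_of_nonpos (by positivity)
      have : (k : ℕ) < (l : ℕ) := h
      omega
    · simp [hsupp j k l mm h]
  have hz : ∀ (j : ZMod f) (k l : Fin n) (mm : Fin M),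
      (nn j k l mm : ℤ) * ((k : ℤ) - (l : ℤ)) = 0 := by
    intro j k l mm
    have h3 := (Finset.sum_eq_zero_iff_of_nonpos (fun j _ =>
      Finset.sum_nonpos (fun k _ => Finset.sum_nonpos (fun l _ =>
        Finset.sum_nonpos (fun mm _ => hterm j k l mm))))).mp h2 j (Finset.mem_univ j)
    have h4 := (Finset.sum_eq_zero_iff_of_nonpos (fun k _ =>
      Finset.sum_nonpos (fun l _ =>
        Finset.sum_nonpos (fun mm _ => hterm j k l mm)))).mp h3 k (Finset.mem_univ k)
    have h5 := (Finset.sum_eq_zero_iff_of_nonpos (fun l _ =>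
        Finset.sum_nonpos (fun mm _ => hterm j k l mm))).mp h4 l (Finset.mem_univ l)
    exact (Finset.sum_eq_zero_iff_of_nonpos (fun mm _ => hterm j k l mm)).mp h5 mm
      (Finset.mem_univ mm)
  have hnn : ∀ j k l mm, nn j k l mm = 0 := by
    intro j k l mm
    by_cases h : k < l
    · have hkl : (k : ℤ) - (l : ℤ) ≠ 0 := by
        have : (k : ℕ) < (l : ℕ) := h
        omega
      have := hz j k l mm
      rcases mul_eq_zero.mp this with h' | h'
      · exact_mod_cast h'
      · exact absurd h' hkl
    · exact hsupp j k l mm h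
  refine ⟨hnn, ?_⟩
  -- now heq reduces to diagonal part
  have heq' : (∑ j : ZMod f, ∑ i : Fin n, m j i • χ j i i) = 0 := by
    have : (∑ j : ZMod f, ∑ k : Fin n, ∑ l : Fin n, ∑ mm : Fin M,
        (nn j k l mm : ℤ) • χ j k l) = 0 := by
      simp [hnn]
    rw [this, add_zero] at heq
    exact heq
  have hm : ∀ (j : ZMod f) (i : Fin n), m (j + 1) i = m j i := by
    intro j i
    have := congrFun heq' (j, i)
    simp only [hχ, Finset.sum_apply, Pi.smul_apply, smul_eq_mul, Pi.zero_apply,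
      Prod.mk.injEq] at this
    simp only [mul_sub, Finset.sum_sub_distrib, mul_ite, mul_one, mul_zero, ite_and,
      eq_sub_iff_add_eq] at this
    simp [Finset.sum_ite_eq] at this
    linarith
  have hstep : ∀ (i : Fin n) (j : ZMod f) (a : ℕ), m (j + a) i = m j i := by
    intro i j a
    induction a with
    | zero => simp
    | succ b ih => push_cast; rw [← add_assoc, hm, ih]
  intro j j' i
  have := hstep i j (j' - j).val
  rw [ZMod.natCast_rightInverse (j' - j), add_sub_cancel] at this
  exact this.symm
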